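/- For participatory budgeting with ordinal preferences, IPSC does not imply CPSC: there exists a PB instance with 4 unit-weight voters, candidates {a,b,c} with w(a)=w(c)=1, w(b)=0.9, budget L=2, dichotomous preferences A_1={a,b}, A_2={a}, A_3=A_4={c}, and an outcome W={c,b} that satisfies IPSC but violates CPSC. -/

import Mathlib

open Finset
open scoped Classical

noncomputable section

/-- Each voter's weak preference relation `pref i` is a total preorder. -/
def TotalPreorder {V C : Type} (pref : V → C → C → Prop) : Prop :=
  (∀ i a b, pref i a b ∨ pref i b a) ∧
  (∀ i a b c, pref i a b → pref i b c → pref i a c)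

/-- `nth i j` is voter `i`'s `(j+1)`-th most preferred candidate under a fixed
tie-breaking: an enumeration of all candidates consistent with `pref i`. -/
def TieBreak {V C : Type} [Fintype C] (pref : V → C → C → Prop) (nth : V → ℕ → C) : Prop :=
  (∀ i c, ∃ j, j < Fintype.card C ∧ nth i j = c) ∧
  (∀ i j j', j ≤ j' → pref i (nth i j) (nth i j'))

/-- `N'` solidly supports `C'`: every voter in `N'` weakly prefers every member of `C'`
to every non-member. -/
def Solid {V C : Type} (pref : V → C → C → Prop) (N' : Finset V) (C' : Finset C) : Prop :=
  ∀ i ∈ N', ∀ c' ∈ C', ∀ c, c ∉ C' → pref i c' c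

/-- `P(N',C') = {c : ∃ i ∈ N', c ≿_i c^{(i,|C'|)}}` where `c^{(i,j)} = nth i (j-1)`. -/
def Pset {V C : Type} [Fintype C] (pref : V → C → C → Prop) (nth : V → ℕ → C)
    (N' : Finset V) (C' : Finset C) : Finset C :=
  Finset.univ.filter fun c => ∃ i ∈ N', pref i c (nth i (C'.card - 1))

/-- total cost of a set of candidates -/
def cost {C : Type} (w : C → ℝ) (S : Finset C) : ℝ := ∑ c ∈ S, w c

/-- Comparative PSC for PB with general (weak) preferences. -/
def CPSC {V C : Type} [Fintype V] [Fintype C] (pref : V → C → C → Prop) (nth : V → ℕ → C)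
    (b : V → ℝ) (w : C → ℝ) (L : ℝ) (W : Finset C) : Prop :=
  ¬ ∃ (N' : Finset V) (C' : Finset C), Solid pref N' C' ∧
      cost w (Pset pref nth N' C' ∩ W) < (∑ i ∈ N', b i) * L / (Fintype.card V : ℝ) ∧
      ∃ C'' ⊆ C', cost w (Pset pref nth N' C' ∩ W) < cost w C'' ∧
        cost w C'' ≤ (∑ i ∈ N', b i) * L / (Fintype.card V : ℝ)

/-- Inclusion PSC for PB with general (weak) preferences. -/
def IPSC {V C : Type} [Fintype V] [Fintype C] (pref : V → C → C → Prop) (nth : V → ℕ → C)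
    (b : V → ℝ) (w : C → ℝ) (L : ℝ) (W : Finset C) : Prop :=
  ¬ ∃ (N' : Finset V) (C' : Finset C), Solid pref N' C' ∧
      cost w (Pset pref nth N' C' ∩ W) < (∑ i ∈ N', b i) * L / (Fintype.card V : ℝ) ∧
      ∃ c ∈ C', c ∉ Pset pref nth N' C' ∩ W ∧
        cost w (insert c (Pset pref nth N' C' ∩ W)) ≤ (∑ i ∈ N', b i) * L / (Fintype.card V : ℝ)

/-- `W` is exhaustive w.r.t. budget limit `L`. -/
def Exhaustive {C : Type} (w : C → ℝ) (L : ℝ) (W : Finset C) : Prop :=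
  cost w W ≤ L ∧ ∀ c, c ∉ W → L < cost w (insert c W)

/-- `W` is a maximal cost outcome w.r.t. budget limit `L`. -/
def MaximalCost {C : Type} (w : C → ℝ) (L : ℝ) (W : Finset C) : Prop :=
  cost w W ≤ L ∧ ∀ C' : Finset C, cost w C' ≤ L → cost w C' ≤ cost w W

/-- dichotomous preferences with approval sets `A i` -/
def Dichotomous {V C : Type} (pref : V → C → C → Prop) (A : V → Finset C) : Prop :=
  ∀ i a c, pref i a c ↔ (a ∈ A i ∨ c ∉ A i)

/-- `⋃_{i ∈ N'} A i` -/
def unionA {V C : Type} [Fintype C] (A : V → Finset C) (N' : Finset V) : Finset C :=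
  Finset.univ.filter fun c => ∃ i ∈ N', c ∈ A i

/-- `⋂_{i ∈ N'} A i` -/
def interA {V C : Type} [Fintype C] (A : V → Finset C) (N' : Finset V) : Finset C :=
  Finset.univ.filter fun c => ∀ i ∈ N', c ∈ A i

/-- approvals: candidates a=0, b=1, c=2; voters 1: {a,b}, 2: {a}, 3,4: {c} -/
def A2 : Fin 4 → Finset (Fin 3) := ![{0, 1}, {0}, {2}, {2}]

/-- dichotomous preferences induced by `A2` -/
def pref2 : Fin 4 → Fin 3 → Fin 3 → Prop := fun i a c => a ∈ A2 i ∨ c ∉ A2 i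

/-- costs w(a)=1, w(b)=0.9, w(c)=1 -/
def w2 : Fin 3 → ℝ := ![1, 9 / 10, 1]

/-- tie-broken rankings: voters 0,1 rank a,b,c; voters 2,3 rank c,a,b -/
def f4 : Fin 4 → Fin 3 → Fin 3 := ![![0, 1, 2], ![0, 1, 2], ![2, 0, 1], ![2, 0, 1]]

def nth2 : Fin 4 → ℕ → Fin 3 := fun i j => f4 i ⟨min j 2, by omega⟩

/-- integer costs (×10) -/
def w10 : Fin 3 → ℕ := ![10, 9, 10]

def cost10 (S : Finset (Fin 3)) : ℕ := ∑ c ∈ S, w10 c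

/-- computable version of `Pset pref2 nth2` -/
def PB (N' : Finset (Fin 4)) (C' : Finset (Fin 3)) : Finset (Fin 3) :=
  Finset.univ.filter fun c => ∃ i ∈ N', c ∈ A2 i ∨ nth2 i (C'.card - 1) ∉ A2 i

lemma Pset_eq (N' : Finset (Fin 4)) (C' : Finset (Fin 3)) :
    Pset pref2 nth2 N' C' = PB N' C' := by
  unfold Pset PB pref2
  congr 1

lemma cost_eq (S : Finset (Fin 3)) : cost w2 S = (cost10 S : ℝ) / 10 := by
  have h : ∀ c : Fin 3, w2 c = (w10 c : ℝ) / 10 := by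
    intro c; fin_cases c <;> norm_num [w2, w10]
  simp only [cost, cost10]
  push_cast
  rw [Finset.sum_div]
  exact Finset.sum_congr rfl fun c _ => h c

lemma keyLemma : ∀ N' : Finset (Fin 4), ∀ C' : Finset (Fin 3),
    (∀ i ∈ N', ∀ c' ∈ C', ∀ c, c ∉ C' → (c' ∈ A2 i ∨ c ∉ A2 i)) →
    cost10 (PB N' C' ∩ ({2, 1} : Finset (Fin 3))) * 2 < N'.card * 10 →
    ∀ c ∈ C', c ∉ PB N' C' ∩ ({2, 1} : Finset (Fin 3)) →
      N'.card * 10 < cost10 (insert c (PB N' C' ∩ ({2, 1} : Finset (Fin 3)))) * 2 := by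
  decide

lemma keyF : ∀ i : Fin 4, ∀ k k' : Fin 3, k ≤ k' →
    (f4 i k ∈ A2 i ∨ f4 i k' ∉ A2 i) := by decide

/-- IPSC does not imply CPSC: the outcome W={c,b} satisfies IPSC
but violates CPSC in this instance (unit voter budgets, L=2). -/
theorem ipsc_not_implies_cpsc :
    ∃ nth : Fin 4 → ℕ → Fin 3,
      TotalPreorder pref2 ∧ TieBreak pref2 nth ∧ Dichotomous pref2 A2 ∧
      IPSC pref2 nth (fun _ => (1 : ℝ)) w2 2 ({2, 1} : Finset (Fin 3)) ∧
      ¬ CPSC pref2 nth (fun _ => (1 : ℝ)) w2 2 ({2, 1} : Finset (Fin 3)) := by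
  refine ⟨nth2, ⟨?_, ?_⟩, ⟨?_, ?_⟩, fun _ _ _ => Iff.rfl, ?_, ?_⟩
  · show ∀ i a b : _, (a ∈ A2 i ∨ b ∉ A2 i) ∨ (b ∈ A2 i ∨ a ∉ A2 i)
    decide
  · show ∀ i a b c : _, (a ∈ A2 i ∨ b ∉ A2 i) → (b ∈ A2 i ∨ c ∉ A2 i) →
      (a ∈ A2 i ∨ c ∉ A2 i)
    decide
  · -- tie-break enumerates all candidates
    intro i c
    fin_cases i <;> fin_cases c
    · exact ⟨0, by norm_num, by decide⟩
    · exact ⟨1, by norm_num, by decide⟩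
    · exact ⟨2, by norm_num, by decide⟩
    · exact ⟨0, by norm_num, by decide⟩
    · exact ⟨1, by norm_num, by decide⟩
    · exact ⟨2, by norm_num, by decide⟩
    · exact ⟨1, by norm_num, by decide⟩
    · exact ⟨2, by norm_num, by decide⟩
    · exact ⟨0, by norm_num, by decide⟩
    · exact ⟨1, by norm_num, by decide⟩
    · exact ⟨2, by norm_num, by decide⟩
    · exact ⟨0, by norm_num, by decide⟩
  · -- tie-break consistent with preferences
    intro i j j' hjj'
    exact keyF i ⟨min j 2, by omega⟩ ⟨min j' 2, by omega⟩ (by simp [Fin.le_def]; omega)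
  · -- IPSC holds
    rintro ⟨N', C', hs, hc, c, hcC, hcP, hins⟩
    have einst : ((fun a b => Classical.propDecidable (a = b)) : DecidableEq (Fin 3)) =
        instDecidableEqFin 3 := by funext a b; exact Subsingleton.elim _ _
    rw [Pset_eq] at hc hcP hins
    rw [einst] at hc hcP hins
    have hsum : (∑ _i ∈ N', (1 : ℝ)) = (N'.card : ℝ) := by simp
    have hcard : (Fintype.card (Fin 4) : ℝ) = 4 := by simp
    rw [cost_eq, hsum, hcard] at hc hins
    have hc' : cost10 (PB N' C' ∩ ({2, 1} : Finset (Fin 3))) * 2 < N'.card * 10 := by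
      have : ((cost10 (PB N' C' ∩ ({2, 1} : Finset (Fin 3))) * 2 : ℕ) : ℝ) <
          ((N'.card * 10 : ℕ) : ℝ) := by push_cast; linarith
      exact_mod_cast this
    have hkey := keyLemma N' C' hs hc' c hcC hcP
    have : ((N'.card * 10 : ℕ) : ℝ) <
        ((cost10 (insert c (PB N' C' ∩ ({2, 1} : Finset (Fin 3)))) * 2 : ℕ) : ℝ) := by
      exact_mod_cast hkey
    push_cast at this
    linarith
  · -- CPSC fails: witness N' = {0,1}, C' = {0}, C'' = {0}
    intro hC
    refine hC ⟨{0, 1}, {0}, ?_, ?_, {0}, by decide, ?_, ?_⟩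
    · intro i hi c' hc' c hcn
      have hc0 : c' = 0 := by simpa using hc'
      subst hc0
      fin_cases hi <;> exact Or.inl (by decide)
    · have einst : ((fun a b => Classical.propDecidable (a = b)) : DecidableEq (Fin 3)) =
          instDecidableEqFin 3 := by funext a b; exact Subsingleton.elim _ _
      rw [Pset_eq, einst]
      have hP : PB {0, 1} {0} ∩ ({2, 1} : Finset (Fin 3)) = {1} := by decide
      rw [hP]
      have : cost w2 {1} = 9 / 10 := by simp [cost, w2]
      rw [this]
      norm_num
    · have einst : ((fun a b => Classical.propDecidable (a = b)) : DecidableEq (Fin 3)) =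
          instDecidableEqFin 3 := by funext a b; exact Subsingleton.elim _ _
      rw [Pset_eq, einst]
      have hP : PB {0, 1} {0} ∩ ({2, 1} : Finset (Fin 3)) = {1} := by decide
      rw [hP]
      have h1 : cost w2 {1} = 9 / 10 := by simp [cost, w2]
      have h0 : cost w2 {0} = 1 := by simp [cost, w2]
      rw [h1, h0]; norm_num
    · have h0 : cost w2 {0} = 1 := by simp [cost, w2]
      rw [h0]; norm_num
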